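/- For a decreasing continuous function θ : ℝ → [0,1] and levels 0 < β < ω < 1, the set {t ∈ ℝ : β < θ(t) ≤ ω} is an interval whose length equals (t_−(β) − t_+(ω))⁺, where t_−(β) = sup{t : θ(t) > β} and t_+(ω) = inf{t : θ(t) ≤ ω}; hence ∫_ℝ 1_{(β,ω]}(θ(t)) dt = (t_−(β) − t_+(ω))⁺ provided θ tends to 1 at −∞ and 0 at +∞ and θ is strictly decreasing where it takes values in (β,ω]. -/

import Mathlib

open MeasureTheory Set Filter
open scoped Topology

/-- For a decreasing continuous `θ : ℝ → [0,1]` with limits `1` at `-∞` and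
`0` at `+∞`, strictly decreasing where it takes values in `(β,ω]`, and levels
`0 < β < ω < 1`: the set `{t : β < θ t ≤ ω}` is an interval (order-connected)
and `∫_ℝ 1_{(β,ω]}(θ t) dt = (t₋(β) - t₊(ω))⁺`, where
`t₋(β) = sup {t : β < θ t}` and `t₊(ω) = inf {t : θ t ≤ ω}`. -/
theorem occupation_time_formula (θ : ℝ → ℝ)
    (hθcont : Continuous θ) (hθanti : Antitone θ)
    (hθrange : ∀ t, θ t ∈ Set.Icc (0:ℝ) 1)
    (hθbot : Tendsto θ atBot (𝓝 1)) (hθtop : Tendsto θ atTop (𝓝 0))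
    (β ω : ℝ) (hβ : 0 < β) (hβω : β < ω) (hω : ω < 1)
    (hstrict : ∀ s t : ℝ, s < t → θ s ∈ Set.Ioc β ω → θ t ∈ Set.Ioc β ω →
      θ t < θ s) :
    {t : ℝ | θ t ∈ Set.Ioc β ω}.OrdConnected ∧
    ∫ t : ℝ, (if θ t ∈ Set.Ioc β ω then (1:ℝ) else 0)
      = max (sSup {t : ℝ | β < θ t} - sInf {t : ℝ | θ t ≤ ω}) 0 := by
  set S : Set ℝ := {t : ℝ | θ t ∈ Set.Ioc β ω} with hS
  set A : Set ℝ := {t : ℝ | β < θ t} with hA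
  set B : Set ℝ := {t : ℝ | θ t ≤ ω} with hB
  -- nonemptiness and boundedness
  have hA_ne : A.Nonempty := by
    have h1 : ∀ᶠ t in atBot, β < θ t :=
      hθbot.eventually (eventually_gt_nhds (hβω.trans hω))
    obtain ⟨t, ht⟩ := h1.exists
    exact ⟨t, ht⟩
  have hB_ne : B.Nonempty := by
    have h1 : ∀ᶠ t in atTop, θ t < ω :=
      hθtop.eventually (eventually_lt_nhds (hβ.trans hβω))
    obtain ⟨t, ht⟩ := h1.exists
    exact ⟨t, ht.le⟩
  have hA_bdd : BddAbove A := by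
    have h1 : ∀ᶠ t in atTop, θ t < β := hθtop.eventually (eventually_lt_nhds hβ)
    obtain ⟨t0, ht0⟩ := h1.exists
    refine ⟨t0, fun t ht => ?_⟩
    by_contra h
    push_neg at h
    exact absurd ((hθanti h.le).trans_lt ht0) (not_lt.2 ht.le)
  have hB_bdd : BddBelow B := by
    have h1 : ∀ᶠ t in atBot, ω < θ t := hθbot.eventually (eventually_gt_nhds hω)
    obtain ⟨t0, ht0⟩ := h1.exists
    refine ⟨t0, fun t ht => ?_⟩
    by_contra h
    push_neg at h
    exact absurd (ht0.trans_le (hθanti h.le)) (not_lt.2 ht)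
  set b := sSup A with hb
  set a := sInf B with ha
  -- sandwich
  have hsub : S ⊆ Set.Icc a b := by
    rintro t ⟨ht1, ht2⟩
    exact ⟨csInf_le hB_bdd ht2, le_csSup hA_bdd ht1⟩
  have hsup : Set.Ioo a b ⊆ S := by
    rintro t ⟨ht1, ht2⟩
    obtain ⟨s, hsA, hts⟩ := exists_lt_of_lt_csSup hA_ne ht2
    obtain ⟨r, hrB, hrt⟩ := exists_lt_of_csInf_lt hB_ne ht1
    exact ⟨lt_of_lt_of_le hsA (hθanti hts.le), le_trans (hθanti hrt.le) hrB⟩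
  have hSmeas : MeasurableSet S := hθcont.measurable measurableSet_Ioc
  have hvol : MeasureTheory.volume S = ENNReal.ofReal (b - a) := by
    refine le_antisymm ?_ ?_
    · calc MeasureTheory.volume S ≤ MeasureTheory.volume (Set.Icc a b) :=
            measure_mono hsub
        _ = ENNReal.ofReal (b - a) := Real.volume_Icc
    · calc ENNReal.ofReal (b - a) = MeasureTheory.volume (Set.Ioo a b) :=
            Real.volume_Ioo.symm
        _ ≤ MeasureTheory.volume S := measure_mono hsup
  constructor
  · refine ⟨fun x hx y hy z hz => ?_⟩
    exact ⟨hy.1.trans_le (hθanti hz.2), (hθanti hz.1).trans hx.2⟩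
  · have h1 : (∫ t : ℝ, (if θ t ∈ Set.Ioc β ω then (1:ℝ) else 0))
        = ∫ t : ℝ, S.indicator (fun _ => (1:ℝ)) t := by
      refine congrArg _ (funext fun t => ?_)
      simp [Set.indicator_apply, hS, Set.mem_setOf_eq]
    rw [h1, MeasureTheory.integral_indicator hSmeas, MeasureTheory.setIntegral_const,
      smul_eq_mul, mul_one, MeasureTheory.measureReal_def, hvol]
    rcases le_total (b - a) 0 with h | h
    · rw [ENNReal.ofReal_of_nonpos h, max_eq_right h]
      simp
    · rw [ENNReal.toReal_ofReal h, max_eq_left h]
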